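/- arXiv:0911.5572 — 2 statements merged into one kernel-verified Lean document; each statement's English description precedes it below -/
import Mathlib

section
/- Define κ : ℝ → ℝ by κ(t) = {t/2} + 1/2 − {t/2 + 1/2}, where {x} is the fractional part of x. Then for every complex number s with Re(s) > 0, the Dirichlet eta function satisfies η(s) = s · ∫₁^∞ κ(t) · t^(−s−1) dt. -/
open MeasureTheory Set Complex

noncomputable def kappa (t : ℝ) : ℝ := Int.fract (t / 2) + 1 / 2 - Int.fract (t / 2 + 1 / 2)

noncomputable def dirichletEta (s : ℂ) : ℂ :=
  ∑' k : ℕ, (1 / ((2 * (k : ℂ) + 1)) ^ s - 1 / ((2 * (k : ℂ) + 2)) ^ s)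

lemma fract_eq_of_bounds (k : ℤ) {x : ℝ} (h1 : (k:ℝ) ≤ x) (h2 : x < k + 1) :
    Int.fract x = x - k := by
  rw [← Int.fract_sub_intCast x k]
  exact Int.fract_eq_self.2 ⟨by linarith, by linarith⟩

lemma kappa_even (k : ℤ) {t : ℝ} (h1 : 2*k < t) (h2 : t < 2*k+1) : kappa t = 0 := by
  have e1 : Int.fract (t/2) = t/2 - k := fract_eq_of_bounds k (by linarith) (by linarith)
  have e2 : Int.fract (t/2 + 1/2) = t/2 + 1/2 - k :=
    fract_eq_of_bounds k (by linarith) (by linarith)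
  simp only [kappa, e1, e2]; ring

lemma kappa_odd (k : ℤ) {t : ℝ} (h1 : 2*k+1 < t) (h2 : t < 2*k+2) : kappa t = 1 := by
  have e1 : Int.fract (t/2) = t/2 - k := fract_eq_of_bounds k (by linarith) (by linarith)
  have e2 : Int.fract (t/2 + 1/2) = t/2 + 1/2 - (k+1) := by
    have := fract_eq_of_bounds (k+1) (x := t/2 + 1/2) (by push_cast; linarith)
      (by push_cast; linarith)

    push_cast at this; linarith [this]
  simp only [kappa, e1, e2]; push_cast; ring

lemma measurable_kappa : Measurable kappa := by
  unfold kappa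
  exact ((measurable_fract.comp (measurable_id.div_const 2)).add_const _).sub
    (measurable_fract.comp ((measurable_id.div_const 2).add_const _))

lemma integral_Ioo_cpow (s : ℂ) (hs0 : s ≠ 0) {a b : ℝ} (ha : 0 < a) (hab : a ≤ b) :
    ∫ t in Set.Ioo a b, (t:ℂ)^(-s-1) = ((a:ℂ)^(-s) - (b:ℂ)^(-s))/s := by
  rw [← MeasureTheory.integral_Ioc_eq_integral_Ioo, ← intervalIntegral.integral_of_le hab,
    integral_cpow (Or.inr ⟨by intro h; exact hs0 (by linear_combination -h), by
      rw [Set.uIcc_of_le hab]; exact fun h => absurd h.1 (not_le.2 ha)⟩)]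
  rw [show -s - 1 + 1 = -s by ring, div_neg, ← neg_div, neg_sub]

theorem eta_eq_integral (s : ℂ) (hs : 0 < s.re) :
    dirichletEta s = s * ∫ t in Set.Ioi (1 : ℝ), (kappa t : ℂ) * (t : ℂ) ^ (-s - 1) := by
  have hs0 : s ≠ 0 := fun h => by simp [h] at hs
  set F : ℝ → ℂ := fun t => (kappa t : ℂ) * (t : ℂ) ^ (-s - 1) with hF
  set I : ℕ → Set ℝ := fun n => Ioc (1 + n : ℝ) (1 + n + 1) with hI
  have hU : (⋃ n, I n) = Ioi (1:ℝ) := by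
    ext t
    simp only [hI, mem_iUnion, mem_Ioc, mem_Ioi]
    constructor
    · rintro ⟨n, h1, _⟩; have : (0:ℝ) ≤ n := n.cast_nonneg; linarith
    · intro ht
      have h1 : (1:ℤ) ≤ ⌈t - 1⌉ := by
        rw [Int.le_ceil_iff]; push_cast; linarith
      have hz : (((⌈t - 1⌉ - 1).toNat : ℤ) : ℝ) = (⌈t - 1⌉ : ℝ) - 1 := by
        rw [Int.toNat_of_nonneg (by omega)]; push_cast; ring
      have hz' : (((⌈t - 1⌉ - 1).toNat : ℕ) : ℝ) = (⌈t - 1⌉ : ℝ) - 1 := by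
        exact_mod_cast hz
      refine ⟨(⌈t - 1⌉ - 1).toNat, ?_, ?_⟩
      · rw [hz']
        have := Int.ceil_lt_add_one (t - 1)
        linarith
      · rw [hz']
        have := Int.le_ceil (t - 1)
        linarith
  have hmeas : ∀ n, MeasurableSet (I n) := fun n => measurableSet_Ioc
  have key : ∀ m n : ℕ, m < n → Disjoint (I m) (I n) := by
    intro m n h
    apply Set.Ioc_disjoint_Ioc.2
    have hmn : (m:ℝ) + 1 ≤ n := by exact_mod_cast h
    calc min (1+(m:ℝ)+1) (1+(n:ℝ)+1) ≤ 1+(m:ℝ)+1 := min_le_left _ _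
      _ ≤ 1+(n:ℝ) := by linarith
      _ ≤ max (1+(m:ℝ)) (1+(n:ℝ)) := le_max_right _ _
  have hdisj : Pairwise (Function.onFun Disjoint I) := by
    intro m n hmn
    rcases hmn.lt_or_gt with h | h
    · exact key m n h
    · exact (key n m h).symm
  have hint : IntegrableOn F (Ioi 1) := by
    have hg : IntegrableOn (fun t : ℝ => (t:ℂ)^(-s-1)) (Ioi 1) :=
      integrableOn_Ioi_cpow_of_lt (by simp; linarith) one_pos
    refine Integrable.bdd_mul (c := 3/2) hg ?_ (ae_of_all _ fun t => ?_)
    · exact (Complex.measurable_ofReal.comp measurable_kappa).aestronglyMeasurable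
    · rw [Complex.norm_real, Real.norm_eq_abs]
      have h1 := Int.fract_nonneg (t/2)
      have h2 := Int.fract_lt_one (t/2)
      have h3 := Int.fract_nonneg (t/2 + 1/2)
      have h4 := Int.fract_lt_one (t/2 + 1/2)
      rw [abs_le]; constructor <;> simp only [kappa] <;> linarith
  have hHasSum : HasSum (fun n => ∫ t in I n, F t) (∫ t in Ioi 1, F t) := by
    rw [← hU] at hint ⊢
    exact MeasureTheory.hasSum_integral_iUnion hmeas hdisj hint
  have godd : ∀ k : ℕ, (∫ t in I (2*k+1), F t) = 0 := by
    intro k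
    rw [hI, MeasureTheory.integral_Ioc_eq_integral_Ioo]
    have : (∫ t in Ioo (1 + ((2*k+1:ℕ):ℝ)) (1 + (2*k+1:ℕ) + 1), F t)
        = ∫ t in Ioo (1 + ((2*k+1:ℕ):ℝ)) (1 + (2*k+1:ℕ) + 1), (0:ℂ) := by
      refine setIntegral_congr_fun measurableSet_Ioo fun t ht => ?_
      have ht1 := ht.1; have ht2 := ht.2
      push_cast at ht1 ht2
      have h0 : kappa t = 0 := kappa_even (k+1) (by push_cast; linarith)
        (by push_cast; linarith)
      simp [hF, h0]
    rw [this]; simp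
  have geven : ∀ k : ℕ, (∫ t in I (2*k), F t)
      = ((2*(k:ℂ)+1)^(-s) - (2*(k:ℂ)+2)^(-s))/s := by
    intro k
    rw [hI, MeasureTheory.integral_Ioc_eq_integral_Ioo]
    have : (∫ t in Ioo (1 + ((2*k:ℕ):ℝ)) (1 + (2*k:ℕ) + 1), F t)
        = ∫ t in Ioo (1 + ((2*k:ℕ):ℝ)) (1 + (2*k:ℕ) + 1), (t:ℂ)^(-s-1) := by
      refine setIntegral_congr_fun measurableSet_Ioo fun t ht => ?_
      have ht1 := ht.1; have ht2 := ht.2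
      push_cast at ht1 ht2
      have h1 : kappa t = 1 := kappa_odd k (by push_cast; linarith)
        (by push_cast; linarith)
      simp [hF, h1]
    rw [this, integral_Ioo_cpow s hs0 (by positivity) (by linarith)]
    have c1 : ((1 + ((2*k:ℕ):ℝ) : ℝ) : ℂ) = 2*(k:ℂ)+1 := by push_cast; ring
    have c2 : ((1 + ((2*k:ℕ):ℝ) + 1 : ℝ) : ℂ) = 2*(k:ℂ)+2 := by push_cast; ring
    rw [c1, c2]
  set g : ℕ → ℂ := fun n => ∫ t in I n, F t with hg
  have hsum : Summable g := hHasSum.summable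
  have h2inj : Function.Injective (fun k : ℕ => 2*k) := fun a b h => by dsimp at h; omega
  have hse : Summable (fun k => g (2*k)) := hsum.comp_injective h2inj
  have hso : Summable (fun k => g (2*k+1)) := by
    have : (fun k => g (2*k+1)) = fun _ => (0:ℂ) := funext godd
    rw [this]; exact summable_zero
  have htsum : (∑' k : ℕ, g (2*k)) = ∫ t in Ioi 1, F t := by
    rw [← hHasSum.tsum_eq, ← tsum_even_add_odd hse hso]
    have : (fun k => g (2*k+1)) = fun _ => (0:ℂ) := funext godd
    rw [this, tsum_zero, add_zero]
  rw [← htsum, ← tsum_mul_left]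
  unfold dirichletEta
  congr 1
  ext k
  simp only [hg]
  rw [geven k, mul_div_cancel₀ _ hs0, cpow_neg, cpow_neg, one_div, one_div]
end

section
/- Define κ : ℝ → ℝ by κ(t) = {t/2} + 1/2 − {t/2 + 1/2}, where {x} is the fractional part of x. Let ρ be a complex number with 0 < Re(ρ) < 1 such that η(ρ) = 0, where η is the Dirichlet eta function. Then ρ · ∫_{1/2}^{1} κ(2t) · t^(−ρ−1) dt + ρ · ∫₁^∞ (1/2) · t^(−ρ−1) dt + ρ · ∫₁^∞ {t} · t^(−ρ−1) dt = ρ · ∫₁^∞ {t + 1/2} · t^(−ρ−1) dt. -/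
open MeasureTheory Set intervalIntegral

lemma kappa_two (t : ℝ) : kappa (2 * t) = Int.fract t + 1 / 2 - Int.fract (t + 1 / 2) := by
  have : 2 * t / 2 = t := by ring
  rw [kappa, this]

lemma kappa_abs_le (t : ℝ) : ‖((kappa (2 * t) : ℝ) : ℂ)‖ ≤ 5 / 2 := by
  rw [Complex.norm_real, Real.norm_eq_abs, abs_le, kappa_two]
  have h1 := Int.fract_nonneg t
  have h2 := Int.fract_lt_one t
  have h3 := Int.fract_nonneg (t + 1 / 2)
  have h4 := Int.fract_lt_one (t + 1 / 2)
  constructor <;> nlinarith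

lemma kappa_eq_one {t : ℝ} (n : ℤ) (h1 : (n : ℝ) + 1 / 2 ≤ t) (h2 : t < (n : ℝ) + 1) :
    kappa (2 * t) = 1 := by
  rw [kappa_two]
  have e1 : Int.fract t = t - n := by
    rw [show t = (t - n) + n by ring, Int.fract_add_intCast, Int.fract_eq_self.2 ⟨by linarith, by linarith⟩]
    push_cast; ring
  have e2 : Int.fract (t + 1 / 2) = t - n - 1 / 2 := by
    rw [show t + 1 / 2 = (t - n - 1 / 2) + (n + 1 : ℤ) by push_cast; ring, Int.fract_add_intCast,
      Int.fract_eq_self.2 ⟨by linarith, by linarith⟩]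
  rw [e1, e2]; ring

lemma kappa_eq_zero {t : ℝ} (n : ℤ) (h1 : (n : ℝ) + 1 ≤ t) (h2 : t < (n : ℝ) + 3 / 2) :
    kappa (2 * t) = 0 := by
  rw [kappa_two]
  have e1 : Int.fract t = t - (n + 1) := by
    rw [show t = (t - (n + 1)) + (n + 1 : ℤ) by push_cast; ring, Int.fract_add_intCast,
      Int.fract_eq_self.2 ⟨by push_cast; linarith, by push_cast; linarith⟩]
    push_cast; ring
  have e2 : Int.fract (t + 1 / 2) = t - (n + 1) + 1 / 2 := by
    rw [show t + 1 / 2 = (t - (n + 1) + 1 / 2) + (n + 1 : ℤ) by push_cast; ring, Int.fract_add_intCast,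
      Int.fract_eq_self.2 ⟨by push_cast; linarith, by push_cast; linarith⟩]
  rw [e1, e2]; push_cast; ring

lemma iUnion_Ico_eq_Ici : (⋃ k : ℕ, Ico ((k : ℝ) + 1 / 2) ((k : ℝ) + 3 / 2)) = Ici (1 / 2 : ℝ) := by
  ext x
  simp only [mem_iUnion, mem_Ico, mem_Ici]
  constructor
  · rintro ⟨k, hk1, -⟩
    have : (0 : ℝ) ≤ k := Nat.cast_nonneg k
    linarith
  · intro hx
    refine ⟨⌊x - 1 / 2⌋₊, ?_, ?_⟩
    · have := Nat.floor_le (by linarith : (0 : ℝ) ≤ x - 1 / 2)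
      linarith
    · have := Nat.lt_floor_add_one (x - 1 / 2)
      linarith

lemma half_cpow (ρ : ℂ) {a : ℝ} (ha : 0 ≤ a) :
    ((a / 2 : ℝ) : ℂ) ^ (-ρ) = 2 ^ ρ * ((a : ℝ) : ℂ) ^ (-ρ) := by
  have : ((a / 2 : ℝ) : ℂ) = ((a : ℝ) : ℂ) * (((2 : ℝ)⁻¹ : ℝ) : ℂ) := by push_cast; ring
  rw [this, Complex.mul_cpow_ofReal_nonneg ha (by norm_num)]
  have h2 : (((2 : ℝ)⁻¹ : ℝ) : ℂ) = (2 : ℂ)⁻¹ := by push_cast; ring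
  rw [h2, Complex.inv_cpow _ _ (by
    rw [show (2 : ℂ) = ((2 : ℝ) : ℂ) by norm_num, Complex.arg_ofReal_of_nonneg (by norm_num)]
    exact Real.pi_ne_zero.symm), Complex.cpow_neg 2 ρ, inv_inv]
  ring

section Main

variable {ρ : ℂ}

lemma piece (hne : ρ ≠ 0) (hre : 0 < ρ.re)
    (hκIci : IntegrableOn (fun t : ℝ => ((kappa (2 * t) : ℝ) : ℂ) * (t : ℂ) ^ (-ρ - 1)) (Ici (1 / 2 : ℝ)))
    (k : ℕ) :
    ρ * ∫ t in Ico ((k : ℝ) + 1 / 2) ((k : ℝ) + 3 / 2),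
        ((kappa (2 * t) : ℝ) : ℂ) * (t : ℂ) ^ (-ρ - 1)
      = 2 ^ ρ * (1 / (2 * (k : ℂ) + 1) ^ ρ - 1 / (2 * (k : ℂ) + 2) ^ ρ) := by
  have hk0 : (0 : ℝ) ≤ k := Nat.cast_nonneg k
  have hsplit : Ico ((k : ℝ) + 1 / 2) ((k : ℝ) + 3 / 2)
      = Ico ((k : ℝ) + 1 / 2) ((k : ℝ) + 1) ∪ Ico ((k : ℝ) + 1) ((k : ℝ) + 3 / 2) :=
    (Ico_union_Ico_eq_Ico (by linarith) (by linarith)).symm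
  have hdisj : Disjoint (Ico ((k : ℝ) + 1 / 2) ((k : ℝ) + 1)) (Ico ((k : ℝ) + 1) ((k : ℝ) + 3 / 2)) :=
    Ico_disjoint_Ico_same
  have hint1 : IntegrableOn (fun t : ℝ => ((kappa (2 * t) : ℝ) : ℂ) * (t : ℂ) ^ (-ρ - 1))
      (Ico ((k : ℝ) + 1 / 2) ((k : ℝ) + 1)) :=
    hκIci.mono_set (fun x hx => le_trans (by linarith) hx.1)
  have hint2 : IntegrableOn (fun t : ℝ => ((kappa (2 * t) : ℝ) : ℂ) * (t : ℂ) ^ (-ρ - 1))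
      (Ico ((k : ℝ) + 1) ((k : ℝ) + 3 / 2)) :=
    hκIci.mono_set (fun x hx => le_trans (by linarith) hx.1)
  rw [hsplit, setIntegral_union hdisj measurableSet_Ico hint1 hint2]
  have hzero : ∫ t in Ico ((k : ℝ) + 1) ((k : ℝ) + 3 / 2),
      ((kappa (2 * t) : ℝ) : ℂ) * (t : ℂ) ^ (-ρ - 1) = 0 := by
    have heq : EqOn (fun t : ℝ => ((kappa (2 * t) : ℝ) : ℂ) * (t : ℂ) ^ (-ρ - 1))
        (fun _ : ℝ => (0 : ℂ)) (Ico ((k : ℝ) + 1) ((k : ℝ) + 3 / 2)) := fun t ht => by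
      have h := kappa_eq_zero (k : ℤ) (t := t) (by push_cast; exact_mod_cast ht.1)
        (by push_cast; exact_mod_cast ht.2)
      simp [h]
    rw [setIntegral_congr_fun measurableSet_Ico heq, MeasureTheory.integral_zero]
  have hone : ∫ t in Ico ((k : ℝ) + 1 / 2) ((k : ℝ) + 1),
      ((kappa (2 * t) : ℝ) : ℂ) * (t : ℂ) ^ (-ρ - 1)
      = ∫ t in Ico ((k : ℝ) + 1 / 2) ((k : ℝ) + 1), (t : ℂ) ^ (-ρ - 1) :=
    setIntegral_congr_fun measurableSet_Ico
      (fun t ht => by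
        rw [kappa_eq_one (k : ℤ) (by push_cast; exact_mod_cast ht.1) (by push_cast; exact_mod_cast ht.2)]
        simp)
  rw [hzero, hone, add_zero, setIntegral_congr_set Ico_ae_eq_Ioc,
    ← intervalIntegral.integral_of_le (by linarith : (k : ℝ) + 1 / 2 ≤ (k : ℝ) + 1),
    integral_cpow (Or.inr ⟨by intro h; apply hne; linear_combination -h, by
      rw [Set.uIcc_of_le (by linarith)]
      simp only [Set.mem_Icc, not_and, not_le]
      intro h; linarith⟩)]
  have hexp : -ρ - 1 + 1 = -ρ := by ring
  rw [hexp]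
  have ha : (((k : ℝ) + 1 / 2 : ℝ) : ℂ) ^ (-ρ) = 2 ^ ρ * ((2 * (k : ℝ) + 1 : ℝ) : ℂ) ^ (-ρ) := by
    rw [show ((k : ℝ) + 1 / 2 : ℝ) = (2 * (k : ℝ) + 1) / 2 by ring, half_cpow ρ (by linarith)]
  have hb : (((k : ℝ) + 1 : ℝ) : ℂ) ^ (-ρ) = 2 ^ ρ * ((2 * (k : ℝ) + 2 : ℝ) : ℂ) ^ (-ρ) := by
    rw [show ((k : ℝ) + 1 : ℝ) = (2 * (k : ℝ) + 2) / 2 by ring, half_cpow ρ (by linarith)]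
  have hca : ((2 * (k : ℝ) + 1 : ℝ) : ℂ) = 2 * (k : ℂ) + 1 := by push_cast; ring
  have hcb : ((2 * (k : ℝ) + 2 : ℝ) : ℂ) = 2 * (k : ℂ) + 2 := by push_cast; ring
  push_cast at ha hb ⊢
  have h5 : ∀ X : ℂ, ρ * (X / -ρ) = -X := fun X => by rw [div_neg, mul_neg, mul_div_assoc', mul_comm, mul_div_assoc, div_self hne, mul_one]
  rw [ha, hb, one_div, one_div, ← Complex.cpow_neg, ← Complex.cpow_neg, h5]
  ring

end Main

theorem eta_zero_integral_identity (ρ : ℂ) (h0 : 0 < ρ.re) (h1 : ρ.re < 1)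
    (hη : dirichletEta ρ = 0) :
    ρ * (∫ t in (1 / 2 : ℝ)..1, (kappa (2 * t) : ℂ) * (t : ℂ) ^ (-ρ - 1)) +
      ρ * (∫ t in Set.Ioi (1 : ℝ), (1 / 2 : ℂ) * (t : ℂ) ^ (-ρ - 1)) +
      ρ * (∫ t in Set.Ioi (1 : ℝ), ((Int.fract t : ℝ) : ℂ) * (t : ℂ) ^ (-ρ - 1)) =
      ρ * ∫ t in Set.Ioi (1 : ℝ), ((Int.fract (t + 1 / 2) : ℝ) : ℂ) * (t : ℂ) ^ (-ρ - 1) := by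
  have hne : ρ ≠ 0 := by
    intro h; rw [h] at h0; simp at h0
  have hfint : ∀ c : ℝ, 0 < c → IntegrableOn (fun t : ℝ => (t : ℂ) ^ (-ρ - 1)) (Ioi c) := by
    intro c hc
    refine integrableOn_Ioi_cpow_of_lt ?_ hc
    simp only [Complex.sub_re, Complex.neg_re, Complex.one_re]
    linarith
  have m1 : Measurable fun t : ℝ => 2 * t / 2 := by fun_prop
  have mκ : Measurable fun t : ℝ => ((kappa (2 * t) : ℝ) : ℂ) := by
    refine Complex.measurable_ofReal.comp ?_
    exact ((measurable_fract.comp m1).add_const (1 / 2)).sub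
      (measurable_fract.comp (m1.add_const (1 / 2)))
  have mfr : Measurable fun t : ℝ => ((Int.fract t : ℝ) : ℂ) :=
    Complex.measurable_ofReal.comp measurable_fract
  have mfr2 : Measurable fun t : ℝ => ((Int.fract (t + 1 / 2) : ℝ) : ℂ) :=
    Complex.measurable_ofReal.comp (measurable_fract.comp (measurable_add_const (1 / 2)))
  have hfr_bd : ∀ t : ℝ, ‖((Int.fract t : ℝ) : ℂ)‖ ≤ 1 := fun t => by
    rw [Complex.norm_real, Real.norm_eq_abs, abs_of_nonneg (Int.fract_nonneg t)]
    exact (Int.fract_lt_one t).le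
  have hκIoi : IntegrableOn (fun t : ℝ => ((kappa (2 * t) : ℝ) : ℂ) * (t : ℂ) ^ (-ρ - 1))
      (Ioi (1 / 2 : ℝ)) :=
    (hfint _ (by norm_num)).bdd_mul mκ.aestronglyMeasurable (Filter.Eventually.of_forall kappa_abs_le)
  have hκIci : IntegrableOn (fun t : ℝ => ((kappa (2 * t) : ℝ) : ℂ) * (t : ℂ) ^ (-ρ - 1))
      (Ici (1 / 2 : ℝ)) := by
    rw [integrableOn_Ici_iff_integrableOn_Ioi]; exact hκIoi
  have hint_half : IntegrableOn (fun t : ℝ => (1 / 2 : ℂ) * (t : ℂ) ^ (-ρ - 1)) (Ioi (1 : ℝ)) :=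
    (hfint 1 one_pos).const_mul _
  have hint_fr : IntegrableOn (fun t : ℝ => ((Int.fract t : ℝ) : ℂ) * (t : ℂ) ^ (-ρ - 1))
      (Ioi (1 : ℝ)) :=
    (hfint 1 one_pos).bdd_mul mfr.aestronglyMeasurable (Filter.Eventually.of_forall hfr_bd)
  have hint_fr2 : IntegrableOn (fun t : ℝ => ((Int.fract (t + 1 / 2) : ℝ) : ℂ) * (t : ℂ) ^ (-ρ - 1))
      (Ioi (1 : ℝ)) :=
    (hfint 1 one_pos).bdd_mul mfr2.aestronglyMeasurable (Filter.Eventually.of_forall fun t => hfr_bd (t + 1 / 2))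
  have hint_κ1 : IntegrableOn (fun t : ℝ => ((kappa (2 * t) : ℝ) : ℂ) * (t : ℂ) ^ (-ρ - 1))
      (Ioi (1 : ℝ)) := hκIoi.mono_set (Ioi_subset_Ioi (by norm_num))
  -- combine the three integrals over Ioi 1
  have h2 : (∫ t in Ioi (1 : ℝ), (1 / 2 : ℂ) * (t : ℂ) ^ (-ρ - 1)) +
      (∫ t in Ioi (1 : ℝ), ((Int.fract t : ℝ) : ℂ) * (t : ℂ) ^ (-ρ - 1)) -
      (∫ t in Ioi (1 : ℝ), ((Int.fract (t + 1 / 2) : ℝ) : ℂ) * (t : ℂ) ^ (-ρ - 1)) =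
      ∫ t in Ioi (1 : ℝ), ((kappa (2 * t) : ℝ) : ℂ) * (t : ℂ) ^ (-ρ - 1) := by
    have hadd : IntegrableOn (fun t : ℝ => (1 / 2 : ℂ) * (t : ℂ) ^ (-ρ - 1) +
        ((Int.fract t : ℝ) : ℂ) * (t : ℂ) ^ (-ρ - 1)) (Ioi (1 : ℝ)) := hint_half.add hint_fr
    rw [← integral_add hint_half hint_fr, ← integral_sub hadd hint_fr2]
    refine integral_congr_ae (Filter.Eventually.of_forall fun t => ?_)
    have hk : (kappa (2 * t) : ℝ) = Int.fract t + 1 / 2 - Int.fract (t + 1 / 2) := kappa_two t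
    simp only [hk]; push_cast; ring
  have h3 : (∫ t in Ioc (1 / 2 : ℝ) 1, ((kappa (2 * t) : ℝ) : ℂ) * (t : ℂ) ^ (-ρ - 1)) +
      (∫ t in Ioi (1 : ℝ), ((kappa (2 * t) : ℝ) : ℂ) * (t : ℂ) ^ (-ρ - 1)) =
      ∫ t in Ioi (1 / 2 : ℝ), ((kappa (2 * t) : ℝ) : ℂ) * (t : ℂ) ^ (-ρ - 1) := by
    rw [← setIntegral_union (Ioc_disjoint_Ioi le_rfl) measurableSet_Ioi
      (hκIoi.mono_set Ioc_subset_Ioi_self) hint_κ1,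
      Ioc_union_Ioi_eq_Ioi (by norm_num : (1 / 2 : ℝ) ≤ 1)]
  have hiv : (∫ t in (1 / 2 : ℝ)..1, ((kappa (2 * t) : ℝ) : ℂ) * (t : ℂ) ^ (-ρ - 1)) =
      ∫ t in Ioc (1 / 2 : ℝ) 1, ((kappa (2 * t) : ℝ) : ℂ) * (t : ℂ) ^ (-ρ - 1) :=
    intervalIntegral.integral_of_le (by norm_num)
  have h4 : ρ * ∫ t in Ioi (1 / 2 : ℝ), ((kappa (2 * t) : ℝ) : ℂ) * (t : ℂ) ^ (-ρ - 1) = 0 := by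
    have hd : Pairwise (Function.onFun Disjoint
        fun k : ℕ => Ico ((k : ℝ) + 1 / 2) ((k : ℝ) + 3 / 2)) := by
      intro i j hij
      dsimp [Function.onFun]
      rcases hij.lt_or_gt with h | h
      · have : (i : ℝ) + 1 ≤ (j : ℝ) := by exact_mod_cast Nat.succ_le_of_lt h
        exact Set.Ico_disjoint_Ico.mpr (min_le_of_left_le (le_trans (by linarith) (le_max_right _ _)))
      · have : (j : ℝ) + 1 ≤ (i : ℝ) := by exact_mod_cast Nat.succ_le_of_lt h
        exact Set.Ico_disjoint_Ico.mpr (min_le_of_right_le (le_trans (by linarith) (le_max_left _ _)))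
    have hintU : IntegrableOn (fun t : ℝ => ((kappa (2 * t) : ℝ) : ℂ) * (t : ℂ) ^ (-ρ - 1))
        (⋃ k : ℕ, Ico ((k : ℝ) + 1 / 2) ((k : ℝ) + 3 / 2)) := by
      rw [iUnion_Ico_eq_Ici]; exact hκIci
    rw [← integral_Ici_eq_integral_Ioi, ← iUnion_Ico_eq_Ici,
      MeasureTheory.integral_iUnion (fun k => measurableSet_Ico) hd hintU, ← tsum_mul_left]
    have hpieces := tsum_congr (L := SummationFilter.unconditional ℕ) (fun k => piece hne h0 hκIci k)
    rw [hpieces, tsum_mul_left]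
    unfold dirichletEta at hη
    rw [hη, mul_zero]
  rw [hiv]
  linear_combination ρ * h2 + ρ * h3 + h4
end
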